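/- Let σ be a 2×2 Hermitian complex matrix. Then its robustness of imaginarity in the computational basis equals twice the absolute value of the imaginary part of its off-diagonal entry: (1/2)‖σ − σᵀ‖₁ = 2·|Im σ₀₁|. -/

import Mathlib

open Matrix Kronecker
open scoped ComplexOrder

/-- The positive semidefinite square root of a positive semidefinite matrix
(the definition removed from Mathlib, restated with its old meaning). -/
noncomputable def Matrix.PosSemidef.sqrt {n : Type*} [Fintype n] [DecidableEq n] {𝕜 : Type*}
    [RCLike 𝕜] {A : Matrix n n 𝕜} (hA : A.PosSemidef) : Matrix n n 𝕜 :=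
  hA.1.eigenvectorUnitary.1 * diagonal ((↑) ∘ (√·) ∘ hA.1.eigenvalues) *
  (star hA.1.eigenvectorUnitary : Matrix n n 𝕜)

lemma sqrt_eq_of_eq_smul_one {n : Type*} [Fintype n] [DecidableEq n] {A : Matrix n n ℂ}
    (hA : A.PosSemidef) (c : ℝ) (hc : 0 ≤ c) (h : A = ((c ^ 2 : ℝ) : ℂ) • 1) :
    hA.sqrt = ((c : ℝ) : ℂ) • 1 := by
  have hd := hA.1.conjStarAlgAut_star_eigenvectorUnitary
  subst h
  rw [Unitary.conjStarAlgAut_apply, Matrix.mul_smul, Matrix.mul_one, Matrix.smul_mul,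
    Unitary.coe_star, star_star, Unitary.coe_star_mul_self] at hd
  have hU1 : (star hA.1.eigenvectorUnitary : Matrix n n ℂ) * hA.1.eigenvectorUnitary.1 = 1 :=
    Unitary.coe_star_mul_self _
  have hU2 : hA.1.eigenvectorUnitary.1 * (star hA.1.eigenvectorUnitary : Matrix n n ℂ) = 1 :=
    Unitary.coe_mul_star_self _
  have hev : ∀ i, hA.1.eigenvalues i = c ^ 2 := by
    intro i
    have := congrFun (congrFun hd i) i
    simp at this
    exact_mod_cast this.symm
  have hdiag : diagonal ((RCLike.ofReal : ℝ → ℂ) ∘ (√·) ∘ hA.1.eigenvalues) = ((c : ℝ) : ℂ) • 1 := by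
    ext i j
    by_cases hij : i = j
    · subst hij; simp [hev, Real.sqrt_sq hc]
    · simp [Matrix.diagonal_apply, Matrix.one_apply, hij]
  unfold Matrix.PosSemidef.sqrt
  rw [hdiag, Matrix.mul_smul, Matrix.mul_one, Matrix.smul_mul, hU2]

/-- Trace norm of a square complex matrix: `Tr[sqrt(Aᴴ A)]`. -/
noncomputable def traceNorm {n : Type*} [Fintype n] [DecidableEq n]
    (A : Matrix n n ℂ) : ℝ :=
  ((Matrix.posSemidef_conjTranspose_mul_self A).sqrt.trace).re

/-- Robustness of imaginarity: `(1/2) ‖ρ - ρᵀ‖₁`. -/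
noncomputable def roi {n : Type*} [Fintype n] [DecidableEq n]
    (ρ : Matrix n n ℂ) : ℝ :=
  (1 / 2) * traceNorm (ρ - ρ.transpose)

/-- For a 2×2 Hermitian matrix, the robustness of imaginarity in the
computational basis equals `2·|Im σ₀₁|`. -/
theorem stmt1 (σ : Matrix (Fin 2) (Fin 2) ℂ) (hσ : σ.IsHermitian) :
    roi σ = 2 * |(σ 0 1).im| := by

  set b : ℝ := (σ 0 1).im with hb
  set A : Matrix (Fin 2) (Fin 2) ℂ := σ - σ.transpose with hA
  set B : Matrix (Fin 2) (Fin 2) ℂ := ((2 * |b| : ℝ) : ℂ) • 1 with hB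
  have h10 : σ 1 0 = (starRingEnd ℂ) (σ 0 1) := by
    have := hσ.apply 1 0; rw [← this]; simp
  have hBpsd : B.PosSemidef := by
    rw [hB]
    have : ((2 * |b| : ℝ) : ℂ) • (1 : Matrix (Fin 2) (Fin 2) ℂ)
        = Matrix.diagonal (fun _ => ((2 * |b| : ℝ) : ℂ)) := by
      simp [Matrix.smul_one_eq_diagonal]
    rw [this]
    refine Matrix.posSemidef_diagonal_iff.mpr fun i => ?_
    rw [Complex.nonneg_iff]
    constructor <;> simp [abs_nonneg b]
  have hsq : B ^ 2 = Aᴴ * A := by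
    have key : ∀ i j : Fin 2, (B ^ 2) i j = (Aᴴ * A) i j := by
      intro i j
      rw [pow_two, hB, hA]
      simp only [Matrix.mul_apply, Matrix.smul_apply, Matrix.one_apply,
        Matrix.conjTranspose_apply, Matrix.sub_apply, Matrix.transpose_apply,
        Fin.sum_univ_two, smul_eq_mul]
      fin_cases i <;> fin_cases j <;>
        simp [h10, Complex.ext_iff, Complex.mul_re, Complex.mul_im, mul_comm] <;>
        ring_nf <;>
        simp [sq_abs, Complex.sub_re, Complex.sub_im, Complex.conj_re, Complex.conj_im] <;>
        ring
    exact Matrix.ext key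
  have hsqrt : (Matrix.posSemidef_conjTranspose_mul_self A).sqrt = B :=
    sqrt_eq_of_eq_smul_one _ (2 * |b|) (by positivity)
      (by rw [← hsq, hB, pow_two, Matrix.smul_mul, Matrix.one_mul, smul_smul]; push_cast; ring_nf)
  have : roi σ = (1/2 : ℝ) * (B.trace).re := by
    rw [roi, traceNorm, ← hA, hsqrt]
  rw [this, hB]
  simp [Matrix.trace, Matrix.diag, Matrix.smul_apply, Matrix.one_apply, Fin.sum_univ_two]
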